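/- arXiv:2311.03351 — 2 statements merged into one kernel-verified Lean document; each statement's English description precedes it below -/
import Mathlib

section
/- Let (A, 𝒜, ν) be a measure space and let f₁, …, fₙ : A → ℝ (n ≥ 1) be nonnegative measurable probability densities with respect to ν, i.e. ∫ f_j dν = 1 for each j. Fix i ∈ {1,…,n}, set m(a) := max_{1≤j≤n} f_j(a) and Z := ∫ m dν, and assume Z < ∞ and that a ↦ f_i(a)·log( f_i(a)/m(a) ) (interpreted as 0 where f_i(a) = 0) is ν-integrable. Then ∫ f_i(a)·log( f_i(a) / ( m(a)/Z ) ) dν(a) ≤ ∫ f_i(a)·log( f_i(a)/m(a) ) dν(a) + log n, where both integrands are interpreted as 0 on {f_i = 0}. -/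
open MeasureTheory

/-- **upper bound of Appendix A.1 of the paper.** For probability
densities `f 1, …, f n` (`n ≥ 1`), the KL divergence of `f i` from the normalized
pointwise maximum `(⨆ j, f j) / Z`, where `Z = ∫ ⨆ j, f j dν`, is bounded above by
`∫ f i * log (f i / ⨆ j, f j) dν + log n`.  (The integrands vanish on `{f i = 0}` since
they carry the factor `f i`; the assumption `Z < ∞` is expressed by integrability of the
pointwise maximum.) -/
theorem klDiv_from_normalized_max_upper_bound {A : Type*} [MeasurableSpace A]
    (ν : Measure A) (n : ℕ) (hn : 1 ≤ n) (f : Fin n → A → ℝ)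
    (hmeas : ∀ j, Measurable (f j))
    (hnonneg : ∀ j a, 0 ≤ f j a)
    (hprob : ∀ j, ∫ a, f j a ∂ν = 1)
    (i : Fin n)
    (Z : ℝ) (hZ : Z = ∫ a, ⨆ j, f j a ∂ν)
    (hmaxint : Integrable (fun a => ⨆ j, f j a) ν)
    (hint : Integrable (fun a => f i a * Real.log (f i a / ⨆ j, f j a)) ν) :
    ∫ a, f i a * Real.log (f i a / ((⨆ j, f j a) / Z)) ∂ν
      ≤ (∫ a, f i a * Real.log (f i a / ⨆ j, f j a) ∂ν) + Real.log n := by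
  haveI : Nonempty (Fin n) := ⟨i⟩
  have hle : ∀ j a, f j a ≤ ⨆ k, f k a := fun j a =>
    le_ciSup (Set.Finite.bddAbove (Set.finite_range (fun k => f k a))) j
  have hfint : Integrable (f i) ν := by
    refine hmaxint.mono' (hmeas i).aestronglyMeasurable (ae_of_all _ fun a => ?_)
    rw [Real.norm_of_nonneg (hnonneg i a)]; exact hle i a
  have hZ1 : (1 : ℝ) ≤ Z := by
    rw [hZ, ← hprob i]
    exact integral_mono hfint hmaxint (hle i)
  have hZpos : 0 < Z := lt_of_lt_of_le one_pos hZ1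
  have hsumint : Integrable (fun a => ∑ j, f j a) ν := by
    refine integrable_finset_sum _ fun j _ => ?_
    refine hmaxint.mono' (hmeas j).aestronglyMeasurable (ae_of_all _ fun a => ?_)
    rw [Real.norm_of_nonneg (hnonneg j a)]; exact hle j a
  have hZn : Z ≤ n := by
    have h1 : ∫ a, (⨆ j, f j a) ∂ν ≤ ∫ a, (∑ j, f j a) ∂ν := by
      refine integral_mono hmaxint hsumint fun a => ?_
      exact ciSup_le fun j => Finset.single_le_sum (fun k _ => hnonneg k a) (Finset.mem_univ j)
    have h2 : ∫ a, (∑ j, f j a) ∂ν = n := by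
      rw [integral_finset_sum _ fun j _ => by
        refine hmaxint.mono' (hmeas j).aestronglyMeasurable (ae_of_all _ fun a => ?_)
        rw [Real.norm_of_nonneg (hnonneg j a)]; exact hle j a]
      simp [hprob]
    rw [hZ]; calc _ ≤ _ := h1
    _ = _ := h2
  have hptwise : ∀ a, f i a * Real.log (f i a / ((⨆ j, f j a) / Z))
      = f i a * Real.log (f i a / ⨆ j, f j a) + f i a * Real.log Z := by
    intro a
    rcases eq_or_lt_of_le (hnonneg i a) with h0 | hpos
    · simp [← h0]
    · have hm : 0 < ⨆ j, f j a := lt_of_lt_of_le hpos (hle i a)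
      have : f i a / ((⨆ j, f j a) / Z) = (f i a / ⨆ j, f j a) * Z := by
        field_simp
      rw [this, Real.log_mul (by positivity) (ne_of_gt hZpos), mul_add]
  simp_rw [hptwise]
  rw [integral_add hint (hfint.mul_const _), integral_mul_const, hprob i, one_mul]
  exact add_le_add_right (Real.log_le_log hZpos hZn) _
end

section
/- Let X be a measurable space, let κ₁ and κ₂ be Markov kernels from X to X, and let δ ≥ 0 be such that for every probability measure ν on X, ‖νκ₁ − νκ₂‖_TV ≤ δ. Then for every probability measure μ on X and every t ∈ ℕ, ‖μκ₁^t − μκ₂^t‖_TV ≤ t·δ, where λκ denotes the bind E ↦ ∫ κ(x)(E) dλ(x), λκ^t its t-fold iterate, and ‖·‖_TV the total variation norm of a signed measure. -/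
open MeasureTheory ProbabilityTheory

/-- Pushing a finite measure through a Markov kernel yields a finite measure. -/
instance bindIsFiniteMeasure {X : Type*} [MeasurableSpace X] (μ : Measure X)
    [IsFiniteMeasure μ] (κ : Kernel X X) [IsMarkovKernel κ] :
    IsFiniteMeasure (μ.bind κ) := by
  constructor
  rw [Measure.bind_apply MeasurableSet.univ (Kernel.measurable κ).aemeasurable]
  calc ∫⁻ x, (κ x) Set.univ ∂μ = ∫⁻ _, 1 ∂μ := by simp
    _ = μ Set.univ := by simp
    _ < ⊤ := measure_lt_top μ _

/-- The `t`-fold iterated bind `μ κ^t` of a measure `μ` along a kernel `κ`: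
`μκ^0 = μ` and `μκ^(t+1) = (μκ^t)κ`. -/
noncomputable def iterBind {X : Type*} [MeasurableSpace X] (μ : Measure X)
    (κ : Kernel X X) : ℕ → Measure X
  | 0 => μ
  | t + 1 => (iterBind μ κ t).bind κ

instance iterBindIsFiniteMeasure {X : Type*} [MeasurableSpace X] (μ : Measure X)
    [IsFiniteMeasure μ] (κ : Kernel X X) [IsMarkovKernel κ] (t : ℕ) :
    IsFiniteMeasure (iterBind μ κ t) := by
  induction t with
  | zero => exact inferInstanceAs (IsFiniteMeasure μ)
  | succ t ih => exact @bindIsFiniteMeasure X _ (iterBind μ κ t) ih κ _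

/-- The total variation norm `‖μ − ν‖_TV` of the difference of two finite measures:
the total mass of the total variation of the signed measure `μ − ν`. -/
noncomputable def tvDist {X : Type*} [MeasurableSpace X] (μ ν : Measure X)
    [IsFiniteMeasure μ] [IsFiniteMeasure ν] : ℝ :=
  ((μ.toSignedMeasure - ν.toSignedMeasure).totalVariation Set.univ).toReal


section Aux

open scoped ENNReal

variable {X : Type*} [MeasurableSpace X]

/-- `tvDist` depends only on the difference of the signed measures. -/
lemma tvDist_eq_of_add_eq_add (a b c d : Measure X)
    [IsFiniteMeasure a] [IsFiniteMeasure b] [IsFiniteMeasure c] [IsFiniteMeasure d]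
    (h : a + d = b + c) : tvDist a b = tvDist c d := by
  have h' : a.toSignedMeasure - b.toSignedMeasure = c.toSignedMeasure - d.toSignedMeasure := by
    have h2 := Measure.toSignedMeasure_congr h
    rw [Measure.toSignedMeasure_add, Measure.toSignedMeasure_add] at h2
    rw [sub_eq_sub_iff_add_eq_add, h2, add_comm]
  · rw [tvDist, tvDist, h']

/-- Jordan representation of `tvDist`. -/
lemma tvDist_rep (a b : Measure X) [IsFiniteMeasure a] [IsFiniteMeasure b] :
    ∃ (p n : Measure X) (_ : IsFiniteMeasure p) (_ : IsFiniteMeasure n),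
      a + n = b + p ∧ tvDist a b = (p Set.univ).toReal + (n Set.univ).toReal := by
  set s := a.toSignedMeasure - b.toSignedMeasure with hs
  refine ⟨s.toJordanDecomposition.posPart, s.toJordanDecomposition.negPart,
    inferInstance, inferInstance, ?_, ?_⟩
  · have h := s.toSignedMeasure_toJordanDecomposition
    rw [MeasureTheory.JordanDecomposition.toSignedMeasure] at h
    apply Measure.toSignedMeasure_eq_toSignedMeasure_iff.mp
    rw [Measure.toSignedMeasure_add, Measure.toSignedMeasure_add]
    have h3 := h.trans hs
    rw [sub_eq_sub_iff_add_eq_add] at h3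
    rw [← h3]
    exact add_comm _ _
  · rw [tvDist, ← hs, MeasureTheory.SignedMeasure.totalVariation, Measure.add_apply,
      ENNReal.toReal_add (measure_ne_top _ _) (measure_ne_top _ _)]

/-- Crude bound: `tvDist a b ≤ a(univ) + b(univ)`. -/
lemma tvDist_le_mass (a b : Measure X) [IsFiniteMeasure a] [IsFiniteMeasure b] :
    tvDist a b ≤ (a Set.univ).toReal + (b Set.univ).toReal := by
  set s := a.toSignedMeasure - b.toSignedMeasure with hs
  obtain ⟨i, hi₁, hi₂, hi₃, hp, hn⟩ := s.toJordanDecomposition_spec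
  have hTV : tvDist a b = (s.toJordanDecomposition.posPart Set.univ).toReal
      + (s.toJordanDecomposition.negPart Set.univ).toReal := by
    rw [tvDist, ← hs, MeasureTheory.SignedMeasure.totalVariation, Measure.add_apply,
      ENNReal.toReal_add (measure_ne_top _ _) (measure_ne_top _ _)]
  have hpos : (s.toJordanDecomposition.posPart Set.univ).toReal = s (i ∩ Set.univ) := by
    rw [hp, MeasureTheory.SignedMeasure.toMeasureOfZeroLE_apply _ hi₂ hi₁ MeasurableSet.univ]
    simp
  have hneg : (s.toJordanDecomposition.negPart Set.univ).toReal = -s (iᶜ ∩ Set.univ) := by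
    rw [hn, MeasureTheory.SignedMeasure.toMeasureOfLEZero_apply _ hi₃ hi₁.compl
      MeasurableSet.univ]
    simp
  have hsi : s (i ∩ Set.univ) ≤ (a Set.univ).toReal := by
    rw [hs, MeasureTheory.VectorMeasure.sub_apply,
      Measure.toSignedMeasure_apply_measurable (hi₁.inter MeasurableSet.univ),
      Measure.toSignedMeasure_apply_measurable (hi₁.inter MeasurableSet.univ)]
    have h1 : (a (i ∩ Set.univ)).toReal ≤ (a Set.univ).toReal :=
      ENNReal.toReal_mono (measure_ne_top _ _) (measure_mono (Set.subset_univ _))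
    have h2 : (0:ℝ) ≤ (b (i ∩ Set.univ)).toReal := ENNReal.toReal_nonneg
    rw [measureReal_def, measureReal_def]
    linarith
  have hsci : -s (iᶜ ∩ Set.univ) ≤ (b Set.univ).toReal := by
    rw [hs, MeasureTheory.VectorMeasure.sub_apply,
      Measure.toSignedMeasure_apply_measurable (hi₁.compl.inter MeasurableSet.univ),
      Measure.toSignedMeasure_apply_measurable (hi₁.compl.inter MeasurableSet.univ)]
    have h1 : (b (iᶜ ∩ Set.univ)).toReal ≤ (b Set.univ).toReal :=
      ENNReal.toReal_mono (measure_ne_top _ _) (measure_mono (Set.subset_univ _))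
    have h2 : (0:ℝ) ≤ (a (iᶜ ∩ Set.univ)).toReal := ENNReal.toReal_nonneg
    rw [measureReal_def, measureReal_def]
    linarith
  rw [hTV, hpos, hneg]
  linarith

lemma tvDist_self (a : Measure X) [IsFiniteMeasure a] : tvDist a a = 0 := by
  rw [tvDist, sub_self, MeasureTheory.SignedMeasure.totalVariation_zero]
  simp

lemma tvDist_triangle (a b c : Measure X)
    [IsFiniteMeasure a] [IsFiniteMeasure b] [IsFiniteMeasure c] :
    tvDist a c ≤ tvDist a b + tvDist b c := by
  obtain ⟨p₁, n₁, hp₁, hn₁, h₁, e₁⟩ := tvDist_rep a b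
  obtain ⟨p₂, n₂, hp₂, hn₂, h₂, e₂⟩ := tvDist_rep b c
  have key : a + (n₁ + n₂) = c + (p₁ + p₂) := by
    have : a + n₁ + n₂ = c + p₂ + p₁ := by rw [h₁, add_right_comm, h₂]
    calc a + (n₁ + n₂) = a + n₁ + n₂ := by rw [add_assoc]
      _ = c + p₂ + p₁ := this
      _ = c + (p₁ + p₂) := by rw [add_assoc, add_comm p₂ p₁]
  rw [tvDist_eq_of_add_eq_add a c (p₁ + p₂) (n₁ + n₂) key]
  calc tvDist (p₁ + p₂) (n₁ + n₂)
      ≤ ((p₁ + p₂) Set.univ).toReal + ((n₁ + n₂) Set.univ).toReal := tvDist_le_mass _ _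
    _ = ((p₁ Set.univ).toReal + (n₁ Set.univ).toReal)
        + ((p₂ Set.univ).toReal + (n₂ Set.univ).toReal) := by
        rw [Measure.add_apply, Measure.add_apply,
          ENNReal.toReal_add (measure_ne_top _ _) (measure_ne_top _ _),
          ENNReal.toReal_add (measure_ne_top _ _) (measure_ne_top _ _)]
        ring
    _ = tvDist a b + tvDist b c := by rw [e₁, e₂]

lemma bind_univ_eq (a : Measure X) (κ : Kernel X X) [IsMarkovKernel κ] :
    a.bind κ Set.univ = a Set.univ := by
  rw [Measure.bind_apply MeasurableSet.univ (Kernel.measurable κ).aemeasurable]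
  simp

instance bindIsProbabilityMeasure (μ : Measure X) [IsProbabilityMeasure μ]
    (κ : Kernel X X) [IsMarkovKernel κ] : IsProbabilityMeasure (μ.bind κ) :=
  ⟨by rw [bind_univ_eq]; exact measure_univ⟩

/-- Contraction: pushing through a Markov kernel does not increase `tvDist`. -/
lemma tvDist_bind_le (a b : Measure X) [IsFiniteMeasure a] [IsFiniteMeasure b]
    (κ : Kernel X X) [IsMarkovKernel κ] :
    tvDist (a.bind κ) (b.bind κ) ≤ tvDist a b := by
  obtain ⟨p, n, hp, hn, hab, heq⟩ := tvDist_rep a b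
  haveI := hp; haveI := hn
  have h2 : a.bind κ + n.bind κ = b.bind κ + p.bind κ := by
    rw [← Measure.comp_add, ← Measure.comp_add, hab]
  rw [tvDist_eq_of_add_eq_add (a.bind κ) (b.bind κ) (p.bind κ) (n.bind κ) h2]
  calc tvDist (p.bind κ) (n.bind κ)
      ≤ (p.bind κ Set.univ).toReal + (n.bind κ Set.univ).toReal := tvDist_le_mass _ _
    _ = (p Set.univ).toReal + (n Set.univ).toReal := by rw [bind_univ_eq, bind_univ_eq]
    _ = tvDist a b := heq.symm

instance iterBindIsProbabilityMeasure (μ : Measure X) [IsProbabilityMeasure μ]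
    (κ : Kernel X X) [IsMarkovKernel κ] (t : ℕ) :
    IsProbabilityMeasure (iterBind μ κ t) := by
  induction t with
  | zero => exact inferInstanceAs (IsProbabilityMeasure μ)
  | succ t ih => exact @bindIsProbabilityMeasure X _ (iterBind μ κ t) ih κ _

end Aux

/-- If the one-step total variation discrepancy between two Markov
kernels `κ₁`, `κ₂` is uniformly bounded by `δ` over all initial probability measures,
then the `t`-step distributions satisfy `‖μκ₁^t − μκ₂^t‖_TV ≤ t·δ`. -/
theorem tvDist_iterBind_le_mul {X : Type*} [MeasurableSpace X]
    (κ₁ κ₂ : Kernel X X) [IsMarkovKernel κ₁] [IsMarkovKernel κ₂]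
    (δ : ℝ) (hδ : 0 ≤ δ)
    (hstep : ∀ (ν : Measure X) [IsProbabilityMeasure ν],
      tvDist (ν.bind κ₁) (ν.bind κ₂) ≤ δ)
    (μ : Measure X) [IsProbabilityMeasure μ] (t : ℕ) :
    tvDist (iterBind μ κ₁ t) (iterBind μ κ₂ t) ≤ t * δ := by
  induction t with
  | zero => simpa [iterBind] using (tvDist_self μ).le
  | succ t ih =>
    have h1 : tvDist (iterBind μ κ₁ (t+1)) (iterBind μ κ₂ (t+1))
        ≤ tvDist ((iterBind μ κ₁ t).bind κ₁) ((iterBind μ κ₂ t).bind κ₁)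
          + tvDist ((iterBind μ κ₂ t).bind κ₁) ((iterBind μ κ₂ t).bind κ₂) :=
      tvDist_triangle _ _ _
    have h2 : tvDist ((iterBind μ κ₁ t).bind κ₁) ((iterBind μ κ₂ t).bind κ₁)
        ≤ tvDist (iterBind μ κ₁ t) (iterBind μ κ₂ t) := tvDist_bind_le _ _ _
    have h3 : tvDist ((iterBind μ κ₂ t).bind κ₁) ((iterBind μ κ₂ t).bind κ₂) ≤ δ :=
      hstep (iterBind μ κ₂ t)
    calc tvDist (iterBind μ κ₁ (t+1)) (iterBind μ κ₂ (t+1))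
        ≤ tvDist (iterBind μ κ₁ t) (iterBind μ κ₂ t) + δ := by linarith
      _ ≤ t * δ + δ := by linarith
      _ = (t + 1 : ℕ) * δ := by push_cast; ring
end
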